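/- Let m₁₁ > 0, m₂₁ ≥ 0, m₂₂ < 0, η > 0, let M be the 2×2 lower-triangular matrix with entries M₁₁ = m₁₁, M₁₂ = 0, M₂₁ = m₂₁, M₂₂ = m₂₂, and let 𝒟 : [0,∞) → M₂(ℝ) be a continuous matrix-valued function with 𝒟₁₂(t) = 0 for all t and 𝒟(t) → 0 as t → ∞. Then any differentiable solution z : [0,∞) → ℝ² of dz/dt = (M + 𝒟(t)) z(t) − η (|z₁(t)| + |z₂(t)|) z(t) with z(0) ∈ (0,∞) × [0,∞) converges as t → ∞ to the vector z̄ given by z̄₁ = (m₁₁/η) · 1/(1 + m₂₁/(m₁₁ − m₂₂)) and z̄₂ = (m₂₁/(m₁₁ − m₂₂)) z̄₁. -/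

import Mathlib

open MeasureTheory Set Filter Real

noncomputable section

private lemma slope_abs_freq {w : ℝ → ℝ} {d x q : ℝ}
    (hd : HasDerivWithinAt w d (Ioi x) x)
    (h1 : 0 < w x → d < q) (h2 : w x = 0 → |d| < q) (h3 : w x < 0 → -d < q) :
    ∃ᶠ z in nhdsWithin x (Ioi x), (z - x)⁻¹ * (|w z| - |w x|) < q := by
  have hslope : Tendsto (slope w x) (nhdsWithin x (Ioi x)) (nhds d) := by
    have h := hasDerivWithinAt_iff_tendsto_slope.1 hd
    rwa [Set.diff_singleton_eq_self (by simp : x ∉ Ioi x)] at h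
  have hcont : Tendsto w (nhdsWithin x (Ioi x)) (nhds (w x)) := hd.continuousWithinAt
  rcases lt_trichotomy (w x) 0 with hneg | hzero | hpos
  · have hev : ∀ᶠ z in nhdsWithin x (Ioi x), w z < 0 := hcont (Iio_mem_nhds hneg)
    have hev2 : ∀ᶠ z in nhdsWithin x (Ioi x), -slope w x z < q :=
      (hslope.neg).eventually_lt_const (h3 hneg)
    refine ((hev.and (hev2.and (eventually_mem_nhdsWithin))).mono ?_).frequently
    rintro z ⟨hz1, hz2, hz3⟩
    have heq : (z - x)⁻¹ * (|w z| - |w x|) = -slope w x z := by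
      rw [abs_of_neg hz1, abs_of_neg hneg, slope_def_field, div_eq_mul_inv]; ring
    rw [heq]; exact hz2
  · have hev2 : ∀ᶠ z in nhdsWithin x (Ioi x), |slope w x z| < q :=
      (hslope.abs).eventually_lt_const (h2 hzero)
    refine ((hev2.and (eventually_mem_nhdsWithin)).mono ?_).frequently
    rintro z ⟨hz2, hz3⟩
    have hzx : (0:ℝ) < z - x := sub_pos.2 hz3
    have heq : (z - x)⁻¹ * (|w z| - |w x|) = |slope w x z| := by
      rw [slope_def_field, hzero, sub_zero, abs_div, abs_of_pos hzx, abs_zero, sub_zero,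
        div_eq_mul_inv, mul_comm]
    rw [heq]; exact hz2
  · have hev : ∀ᶠ z in nhdsWithin x (Ioi x), 0 < w z := hcont (Ioi_mem_nhds hpos)
    have hev2 : ∀ᶠ z in nhdsWithin x (Ioi x), slope w x z < q :=
      hslope.eventually_lt_const (h1 hpos)
    refine ((hev.and (hev2.and (eventually_mem_nhdsWithin))).mono ?_).frequently
    rintro z ⟨hz1, hz2, hz3⟩
    have heq : (z - x)⁻¹ * (|w z| - |w x|) = slope w x z := by
      rw [abs_of_pos hz1, abs_of_pos hpos, slope_def_field, div_eq_mul_inv]; ring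
    rw [heq]; exact hz2


private lemma tendsto_of_linear_ode {r a c : ℝ → ℝ} {α γ ρ : ℝ} (hα : α < 0)
    (hρ : γ + α * ρ = 0)
    (ha : Tendsto a atTop (nhds α)) (hc : Tendsto c atTop (nhds γ))
    (hr : ∀ t ∈ Ici (0:ℝ), HasDerivWithinAt r (c t + a t * r t) (Ici 0) t) :
    Tendsto r atTop (nhds ρ) := by
  have hrc : ContinuousOn r (Ici 0) := fun s hs => (hr s hs).continuousWithinAt
  set k : ℝ := -α / 2 with hk_def
  have hk : 0 < k := by simp only [hk_def]; linarith
  have he : Tendsto (fun t => c t + a t * ρ) atTop (nhds 0) := by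
    have h := hc.add (ha.mul_const ρ)
    rwa [hρ] at h
  rw [Metric.tendsto_atTop]
  intro ε hε
  have hae : ∀ᶠ t in atTop, a t < -k := ha.eventually_lt_const (by linarith)
  have hee : ∀ᶠ t in atTop, |c t + a t * ρ| < ε * k / 2 := by
    have h := he.abs
    rw [abs_zero] at h
    exact h.eventually_lt_const (by positivity)
  obtain ⟨T, hT⟩ := eventually_atTop.1 ((hae.and hee).and (eventually_ge_atTop (0:ℝ)))
  have hT0 : (0:ℝ) ≤ T := (hT T le_rfl).2
  set δ : ℝ := |r T - ρ| with hδ_def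
  have hδ0 : 0 ≤ δ := abs_nonneg _
  have key : ∀ t, T ≤ t → |r t - ρ| ≤ δ * Real.exp (-k * (t - T)) + ε / 2 := by
    intro t ht
    have hg : ∀ x ∈ Icc T t, |r x - ρ| ≤ gronwallBound δ (-k) (ε * k / 2) (x - T) := by
      apply le_gronwallBound_of_liminf_deriv_right_le
        (f' := fun x => a x * |r x - ρ| + ε * k / 2)
      · exact ((hrc.mono (fun z hz => le_trans hT0 hz.1)).sub continuousOn_const).abs
      · intro x hx q hq
        have hx0 : (0:ℝ) ≤ x := le_trans hT0 hx.1
        have hTx := hT x hx.1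
        have hd : HasDerivWithinAt (fun s => r s - ρ)
            ((c x + a x * ρ) + a x * (r x - ρ)) (Ioi x) x := by
          have h' := (hr x hx0).sub_const ρ
          have heq : c x + a x * r x = (c x + a x * ρ) + a x * (r x - ρ) := by ring
          rw [heq] at h'
          exact h'.mono (fun z hz => le_trans hx0 (le_of_lt hz))
        have hex : |c x + a x * ρ| < ε * k / 2 := hTx.1.2
        apply slope_abs_freq hd
        · intro hpos
          rw [abs_of_pos hpos] at hq
          have h1 : c x + a x * ρ ≤ |c x + a x * ρ| := le_abs_self _
          linarith
        · intro hzero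
          rw [hzero, mul_zero, add_zero]
          rw [hzero, abs_zero, mul_zero, zero_add] at hq
          calc |c x + a x * ρ| < ε * k / 2 := hex
          _ < q := hq
        · intro hneg
          rw [abs_of_neg hneg] at hq
          have h1 : -(c x + a x * ρ) ≤ |c x + a x * ρ| := neg_le_abs _
          linarith
      · exact le_refl δ
      · intro x hx
        have h1 : a x < -k := (hT x hx.1).1.1
        have h2 : 0 ≤ |r x - ρ| := abs_nonneg _
        nlinarith
    have h := hg t (right_mem_Icc.2 ht)
    rw [gronwallBound_of_K_ne_0 (by linarith : -k ≠ 0)] at h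
    have hexp : 0 < Real.exp (-k * (t - T)) := Real.exp_pos _
    have heq : ε * k / 2 / -k = -(ε / 2) := by
      field_simp
    rw [heq] at h
    nlinarith [mul_pos (half_pos hε) hexp]
  have hlim : Tendsto (fun t => δ * Real.exp (-k * (t - T))) atTop (nhds 0) := by
    have h1 : Tendsto (fun t : ℝ => t - T) atTop atTop :=
      tendsto_atTop_add_const_right atTop (-T) tendsto_id
    have h2 : Tendsto (fun t : ℝ => -k * (t - T)) atTop atBot :=
      (tendsto_const_mul_atBot_of_neg (by linarith)).2 h1
    have h3 := (Real.tendsto_exp_atBot.comp h2).const_mul δ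
    simpa using h3
  have hsm : ∀ᶠ t in atTop, δ * Real.exp (-k * (t - T)) < ε / 2 :=
    hlim.eventually_lt_const (by positivity)
  obtain ⟨T2, hT2⟩ := eventually_atTop.1 hsm
  refine ⟨max T T2, fun t ht => ?_⟩
  have h1 := key t (le_trans (le_max_left _ _) ht)
  have h2 := hT2 t (le_trans (le_max_right _ _) ht)
  rw [Real.dist_eq]
  linarith


private lemma pos_of_ode {f g : ℝ → ℝ} (hgc : ContinuousOn g (Ici 0))
    (hf : ∀ t ∈ Ici (0:ℝ), HasDerivWithinAt f (g t * f t) (Ici 0) t)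
    (h0 : 0 < f 0) : ∀ t ∈ Ici (0:ℝ), 0 < f t := by
  intro b hb
  have hb0 : (0:ℝ) ≤ b := hb
  set G : ℝ → ℝ := fun u => ∫ s in (0:ℝ)..u, g s with hG_def
  have hfc : ContinuousOn f (Ici 0) := fun s hs => (hf s hs).continuousWithinAt
  have hGc : ContinuousOn G (Icc 0 b) := by
    have h1 : IntegrableOn g (uIcc 0 b) := by
      rw [uIcc_of_le hb0]
      exact (hgc.mono Icc_subset_Ici_self).integrableOn_Icc
    have := intervalIntegral.continuousOn_primitive_interval h1
    rwa [uIcc_of_le hb0] at this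
  have key : ∀ x ∈ Icc 0 b, f x * Real.exp (-G x) = f 0 * Real.exp (-G 0) := by
    apply constant_of_has_deriv_right_zero
    · exact (hfc.mono Icc_subset_Ici_self).mul
        (Real.continuous_exp.comp_continuousOn hGc.neg)
    · intro x hx
      have hx0 : (0:ℝ) ≤ x := hx.1
      have hfd : HasDerivWithinAt f (g x * f x) (Ici x) x :=
        (hf x hx0).mono (Ici_subset_Ici.2 hx0)
      have hGd : HasDerivWithinAt G (g x) (Ici x) x := by
        apply intervalIntegral.integral_hasDerivWithinAt_right (t := Ioi x)
        · apply ContinuousOn.intervalIntegrable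
          apply hgc.mono
          rw [uIcc_of_le hx0]
          exact Icc_subset_Ici_self
        · exact (hgc.mono (fun z hz => le_trans hx0 (le_of_lt hz))).stronglyMeasurableAtFilter_nhdsWithin
            measurableSet_Ioi x
        · exact (hgc x hx0).mono (fun z hz => le_trans hx0 (le_of_lt hz))
      have hEd : HasDerivWithinAt (fun u => Real.exp (-G u))
          (Real.exp (-G x) * -g x) (Ici x) x := (hGd.neg).exp
      have hmul := hfd.mul hEd
      have heq : (0:ℝ) = g x * f x * Real.exp (-G x) + f x * (Real.exp (-G x) * -g x) := by
        ring
      rw [heq]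
      exact hmul
  have hbkey := key b (right_mem_Icc.2 hb0)
  have hG0 : G 0 = 0 := intervalIntegral.integral_same
  rw [hG0, neg_zero, Real.exp_zero, mul_one] at hbkey
  have hexp : 0 < Real.exp (-G b) := Real.exp_pos _
  by_contra hcon
  push_neg at hcon
  nlinarith


/-- Convergence of solutions of the asymptotically autonomous logistic matrix ODE
`dz/dt = (M + 𝒟(t)) z − η ‖z‖₁ z`, where `M` is lower triangular with `m₁₁ > 0`,
`m₂₁ ≥ 0`, `m₂₂ < 0`, and the perturbation `𝒟(t)` is continuous, lower triangular,
and tends to `0` at infinity.  Any solution started in `(0,∞) × [0,∞)` converges to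
`z̄₁ = (m₁₁/η)/(1 + m₂₁/(m₁₁ − m₂₂))`, `z̄₂ = (m₂₁/(m₁₁ − m₂₂)) z̄₁`. -/
theorem ode_convergence_perturbed
    (m11 m21 m22 η : ℝ) (hm11 : 0 < m11) (hm21 : 0 ≤ m21) (hm22 : m22 < 0) (hη : 0 < η)
    (D11 D21 D22 : ℝ → ℝ)
    (hD11c : ContinuousOn D11 (Ici 0)) (hD21c : ContinuousOn D21 (Ici 0))
    (hD22c : ContinuousOn D22 (Ici 0))
    (hD11 : Tendsto D11 atTop (nhds 0)) (hD21 : Tendsto D21 atTop (nhds 0))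
    (hD22 : Tendsto D22 atTop (nhds 0))
    (z1 z2 : ℝ → ℝ)
    (hz1 : ∀ t ∈ Ici (0:ℝ), HasDerivWithinAt z1
      ((m11 + D11 t) * z1 t - η * (|z1 t| + |z2 t|) * z1 t) (Ici 0) t)
    (hz2 : ∀ t ∈ Ici (0:ℝ), HasDerivWithinAt z2
      ((m21 + D21 t) * z1 t + (m22 + D22 t) * z2 t - η * (|z1 t| + |z2 t|) * z2 t) (Ici 0) t)
    (h0 : 0 < z1 0) (h0' : 0 ≤ z2 0) :
    Tendsto z1 atTop (nhds ((m11 / η) * (1 / (1 + m21 / (m11 - m22))))) ∧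
    Tendsto z2 atTop
      (nhds ((m21 / (m11 - m22)) * ((m11 / η) * (1 / (1 + m21 / (m11 - m22)))))) := by
  have hsub : 0 < m11 - m22 := by linarith
  have hρ0 : 0 ≤ m21 / (m11 - m22) := div_nonneg hm21 hsub.le
  have h1ρ : 0 < 1 + m21 / (m11 - m22) := by linarith
  have hz1c : ContinuousOn z1 (Ici 0) := fun s hs => (hz1 s hs).continuousWithinAt
  have hz2c : ContinuousOn z2 (Ici 0) := fun s hs => (hz2 s hs).continuousWithinAt
  -- positivity of z1
  have hgc : ContinuousOn (fun t => m11 + D11 t - η * (|z1 t| + |z2 t|)) (Ici 0) :=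
    (continuousOn_const.add hD11c).sub (continuousOn_const.mul (hz1c.abs.add hz2c.abs))
  have hpos : ∀ t ∈ Ici (0:ℝ), 0 < z1 t := by
    refine pos_of_ode hgc (fun t ht => ?_) h0
    have h := hz1 t ht
    have heq : (m11 + D11 t) * z1 t - η * (|z1 t| + |z2 t|) * z1 t
        = (m11 + D11 t - η * (|z1 t| + |z2 t|)) * z1 t := by ring
    rwa [heq] at h
  -- the ratio r = z2 / z1
  have hrd : ∀ t ∈ Ici (0:ℝ), HasDerivWithinAt (fun s => z2 s / z1 s)
      ((m21 + D21 t) + ((m22 + D22 t) - (m11 + D11 t)) * (z2 t / z1 t)) (Ici 0) t := by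
    intro t ht
    have hne : z1 t ≠ 0 := (hpos t ht).ne'
    have h := (hz2 t ht).div (hz1 t ht) hne
    refine h.congr_deriv ?_
    field_simp
    ring
  have hA : Tendsto (fun t => (m22 + D22 t) - (m11 + D11 t)) atTop (nhds (m22 - m11)) := by
    have h1 : Tendsto (fun t => m22 + D22 t) atTop (nhds (m22 + 0)) :=
      tendsto_const_nhds.add hD22
    have h2 : Tendsto (fun t => m11 + D11 t) atTop (nhds (m11 + 0)) :=
      tendsto_const_nhds.add hD11
    simpa using h1.sub h2
  have hc21 : Tendsto (fun t => m21 + D21 t) atTop (nhds m21) := by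
    simpa using (tendsto_const_nhds.add hD21 :
      Tendsto (fun t => m21 + D21 t) atTop (nhds (m21 + 0)))
  have hrlim : Tendsto (fun s => z2 s / z1 s) atTop (nhds (m21 / (m11 - m22))) := by
    refine tendsto_of_linear_ode (by linarith) ?_ hA hc21 hrd
    field_simp
    ring
  -- y = 1/z1
  have hyd : ∀ t ∈ Ici (0:ℝ), HasDerivWithinAt (fun s => (z1 s)⁻¹)
      (η * (1 + |z2 t / z1 t|) + (-(m11 + D11 t)) * (z1 t)⁻¹) (Ici 0) t := by
    intro t ht
    have hp := hpos t ht
    have h := (hz1 t ht).inv hp.ne'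
    refine h.congr_deriv ?_
    rw [abs_div, abs_of_pos hp]
    field_simp
    ring
  have hClim : Tendsto (fun t => η * (1 + |z2 t / z1 t|)) atTop
      (nhds (η * (1 + m21 / (m11 - m22)))) := by
    have h := hrlim.abs
    rw [abs_of_nonneg hρ0] at h
    exact tendsto_const_nhds.mul (tendsto_const_nhds.add h)
  have hA2 : Tendsto (fun t => -(m11 + D11 t)) atTop (nhds (-m11)) := by
    have h1 : Tendsto (fun t => m11 + D11 t) atTop (nhds (m11 + 0)) :=
      tendsto_const_nhds.add hD11
    simpa using h1.neg
  have hLpos : 0 < η * (1 + m21 / (m11 - m22)) / m11 := by positivity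
  have hylim : Tendsto (fun s => (z1 s)⁻¹) atTop
      (nhds (η * (1 + m21 / (m11 - m22)) / m11)) := by
    refine tendsto_of_linear_ode (by linarith : -m11 < 0) ?_ hA2 hClim hyd
    field_simp
    ring
  have hz1lim : Tendsto z1 atTop (nhds ((η * (1 + m21 / (m11 - m22)) / m11)⁻¹)) := by
    have h := hylim.inv₀ hLpos.ne'
    simpa only [inv_inv] using h
  have hLeq : (η * (1 + m21 / (m11 - m22)) / m11)⁻¹
      = (m11 / η) * (1 / (1 + m21 / (m11 - m22))) := by
    have hne : (1 + m21 / (m11 - m22)) ≠ 0 := h1ρ.ne'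
    rw [inv_eq_one_div]
    field_simp
  have hz1lim' : Tendsto z1 atTop (nhds ((m11 / η) * (1 / (1 + m21 / (m11 - m22))))) := by
    rwa [hLeq] at hz1lim
  refine ⟨hz1lim', ?_⟩
  have hmul := hrlim.mul hz1lim'
  refine hmul.congr' ?_ |>.mono_right le_rfl
  filter_upwards [eventually_ge_atTop (0:ℝ)] with t ht
  exact div_mul_cancel₀ (z2 t) (hpos t ht).ne'
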